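/- Let 0 < α < 1, let n ≥ 2 be an integer, and let u be a nonnegative absolutely continuous real-valued function on [0,T]. Then for all t ∈ (0,T], u(t)^{n−1} · ∂_t^α u(t) ≥ (1/n) ∂_t^α (u^n)(t). -/

import Mathlib

open MeasureTheory Real Filter
open scoped ENNReal

noncomputable section

/-- Euclidean space `ℝ^N`. -/
abbrev Euc (N : ℕ) := EuclideanSpace ℝ (Fin N)

/-- Left Caputo fractional derivative of order `α`:
`∂_t^α f(t) = (1/Γ(1-α)) ∫_0^t f'(s) (t-s)^{-α} ds`. -/
def caputo (α : ℝ) (f : ℝ → ℝ) (t : ℝ) : ℝ :=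
  (1 / Real.Gamma (1 - α)) * ∫ s in Set.Ioo (0:ℝ) t, deriv f s * (t - s) ^ (-α)

/-- The closed cube `B(x,δ) = {y : |yᵢ - xᵢ| ≤ δ}`. -/
def Cube {N : ℕ} (x : Euc N) (δ : ℝ) : Set (Euc N) := {y | ∀ i, |y i - x i| ≤ δ}

/-- Divergence of a vector field on `ℝ^N`. -/
def diverg {N : ℕ} (F : Euc N → Euc N) (x : Euc N) : ℝ :=
  ∑ i, fderiv ℝ (fun y => F y i) x (EuclideanSpace.single i 1)

/-- The p-Laplacian `Δ_p u = div(|∇u|^{p-2} ∇u)`. -/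
def pLap {N : ℕ} (p : ℝ) (u : Euc N → ℝ) (x : Euc N) : ℝ :=
  diverg (fun y => ‖gradient u y‖ ^ (p - 2) • gradient u y) x

/-- The Laplacian as the sum of second partial derivatives. -/
def lap {N : ℕ} (f : Euc N → ℝ) (x : Euc N) : ℝ :=
  ∑ i, fderiv ℝ (fun y => fderiv ℝ f y (EuclideanSpace.single i 1)) x (EuclideanSpace.single i 1)

/-- Convolution `(J*u)(x) = ∫_{ℝ^N} J(x-y) u(y) dy`. -/
def conv {N : ℕ} (J u : Euc N → ℝ) (x : Euc N) : ℝ := ∫ y, J (x - y) * u y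

/-- Hypotheses on the competition kernel `J`:
`0 ≤ J ∈ L¹`, `∫ J = 1`, and `inf_{B(0,δ₀)} J > η`. -/
def KernelHyp {N : ℕ} (J : Euc N → ℝ) (δ₀ η : ℝ) : Prop :=
  (∀ y, 0 ≤ J y) ∧ Integrable J ∧ (∫ y, J y) = 1 ∧
    η < sInf (J '' {y | ∀ i, |y i| < δ₀})

/-- Absolute continuity of `f` on `[0,T]`, encoded via the fundamental theorem of calculus:
the a.e. derivative is integrable and `f t = f 0 + ∫_0^t f'`. -/
def AbsCont (f : ℝ → ℝ) (T : ℝ) : Prop :=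
  IntegrableOn (deriv f) (Set.Icc 0 T) ∧
    ∀ t ∈ Set.Icc (0:ℝ) T, f t = f 0 + ∫ s in (0:ℝ)..t, deriv f s


section AuxLemmas
open Set Metric Topology

theorem ae_hasDerivAt_primitive (G : ℝ → ℝ) (hG : Integrable G) :
    ∀ᵐ x, HasDerivAt (fun r => ∫ s in (0:ℝ)..r, G s) (G x) x := by
  filter_upwards [IsUnifLocDoublingMeasure.ae_tendsto_average_norm_sub
    (μ := (volume : Measure ℝ)) hG.locallyIntegrable 1] with x hx
  have key : Tendsto (fun r : ℝ => ⨍ y in closedBall x r, ‖G y - G x‖) (𝓝[>] 0) (𝓝 0) := by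
    apply hx (fun _ => x) id tendsto_id
    filter_upwards [self_mem_nhdsWithin] with r (hr : (0:ℝ) < r)
    simpa using Metric.mem_closedBall_self (α := ℝ) (x := x) (by linarith : (0:ℝ) ≤ 1 * r)
  rw [hasDerivAt_iff_isLittleO]
  rw [Asymptotics.isLittleO_iff]
  intro c hc
  have h2 : ∀ᶠ r in 𝓝[>] (0:ℝ), ⨍ y in closedBall x r, ‖G y - G x‖ ≤ c / 2 := by
    have := key.eventually (eventually_le_nhds (by linarith : (0:ℝ) < c/2))
    filter_upwards [this] with r hr using hr
  rw [eventually_nhdsWithin_iff] at h2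
  rcases Metric.eventually_nhds_iff.mp h2 with ⟨δ, hδ, hδs⟩
  have : ∀ᶠ y in 𝓝 x, dist y x < δ := by
    exact Metric.ball_mem_nhds x hδ
  filter_upwards [this] with y hy
  rcases eq_or_ne y x with rfl | hne
  · simp
  · set r := dist y x with hr
    have hr0 : 0 < r := dist_pos.mpr hne
    have havg : ⨍ z in closedBall x r, ‖G z - G x‖ ≤ c / 2 := by
      apply hδs ?_ hr0
      simpa [Real.dist_eq, abs_of_pos hr0] using hy
    -- F y - F x = ∫ in x..y, G
    have hFI : (∫ s in (0:ℝ)..y, G s) - ∫ s in (0:ℝ)..x, G s = ∫ s in x..y, G s := by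
      rw [← intervalIntegral.integral_add_adjacent_intervals (hG.intervalIntegrable)
        (hG.intervalIntegrable)]
      ring
    have hsub : (∫ s in (0:ℝ)..y, G s) - (∫ s in (0:ℝ)..x, G s) - (y - x) • G x
        = ∫ s in x..y, (G s - G x) := by
      rw [hFI, intervalIntegral.integral_sub hG.intervalIntegrable
        intervalIntegrable_const, intervalIntegral.integral_const]
    simp only [smul_eq_mul] at hsub ⊢
    rw [hsub]
    have hIsub : Set.uIoc x y ⊆ closedBall x r := by
      intro z hz
      rcases Set.mem_uIoc.mp hz with ⟨h1, h2⟩ | ⟨h1, h2⟩ <;>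
        · rw [Metric.mem_closedBall, Real.dist_eq, hr, Real.dist_eq] <;>
          rw [abs_le] <;> constructor <;> cases abs_cases (y - x) <;> linarith [abs_nonneg (y-x), le_abs_self (y-x), neg_abs_le (y-x)]
    calc ‖∫ s in x..y, (G s - G x)‖
        ≤ ∫ s in Set.uIoc x y, ‖G s - G x‖ := intervalIntegral.norm_integral_le_integral_norm_uIoc
      _ ≤ ∫ s in closedBall x r, ‖G s - G x‖ := by
          apply setIntegral_mono_set
          · exact ((hG.integrableOn.sub (integrableOn_const
              (measure_closedBall_lt_top).ne)).norm)
          · filter_upwards with z using norm_nonneg _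
          · exact HasSubset.Subset.eventuallyLE hIsub
      _ = (volume (closedBall x r)).toReal * ⨍ z in closedBall x r, ‖G z - G x‖ := by
          rw [setAverage_eq, smul_eq_mul, measureReal_def, ← mul_assoc, mul_inv_cancel₀, one_mul]
          rw [Real.volume_closedBall, ENNReal.toReal_ofReal (by positivity)]
          positivity
      _ ≤ (2 * r) * (c / 2) := by
          rw [Real.volume_closedBall, ENNReal.toReal_ofReal (by positivity)]
          apply mul_le_mul_of_nonneg_left havg (by positivity)
      _ = c * r := by ring
      _ ≤ c * ‖y - x‖ := by rw [hr, Real.dist_eq]; exact le_of_eq (by rw [Real.norm_eq_abs])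


theorem ftc_mul {f g f' g' : ℝ → ℝ} {a b : ℝ} (hab : a ≤ b)
    (hf' : IntegrableOn f' (Set.Ioc a b)) (hg' : IntegrableOn g' (Set.Ioc a b))
    (hf : ∀ x ∈ Set.Icc a b, f x = f a + ∫ s in Set.Ioc a x, f' s)
    (hg : ∀ x ∈ Set.Icc a b, g x = g a + ∫ s in Set.Ioc a x, g' s) :
    ∫ x in Set.Ioc a b, (f x * g' x + f' x * g x) = f b * g b - f a * g a := by
  set F : ℝ → ℝ := fun x => ∫ s in Set.Ioc a x, f' s with hF
  set G : ℝ → ℝ := fun x => ∫ s in Set.Ioc a x, g' s with hG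
  have hf'I : IntegrableOn f' (Set.Icc a b) := by
    rwa [integrableOn_Icc_iff_integrableOn_Ioc]
  have hg'I : IntegrableOn g' (Set.Icc a b) := by
    rwa [integrableOn_Icc_iff_integrableOn_Ioc]
  have hFc : ContinuousOn F (Set.Icc a b) := intervalIntegral.continuousOn_primitive hf'I
  have hGc : ContinuousOn G (Set.Icc a b) := intervalIntegral.continuousOn_primitive hg'I
  obtain ⟨CF, hCF⟩ := (isCompact_Icc).exists_bound_of_continuousOn hFc
  obtain ⟨CG, hCG⟩ := (isCompact_Icc).exists_bound_of_continuousOn hGc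
  have hFm : AEStronglyMeasurable F (volume.restrict (Set.Ioc a b)) :=
    (hFc.mono Set.Ioc_subset_Icc_self).aestronglyMeasurable measurableSet_Ioc
  have hGm : AEStronglyMeasurable G (volume.restrict (Set.Ioc a b)) :=
    (hGc.mono Set.Ioc_subset_Icc_self).aestronglyMeasurable measurableSet_Ioc
  have hFbd : ∀ᵐ x ∂(volume.restrict (Set.Ioc a b)), ‖F x‖ ≤ CF := by
    filter_upwards [ae_restrict_mem measurableSet_Ioc] with x hx
    exact hCF x (Set.Ioc_subset_Icc_self hx)
  have hGbd : ∀ᵐ x ∂(volume.restrict (Set.Ioc a b)), ‖G x‖ ≤ CG := by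
    filter_upwards [ae_restrict_mem measurableSet_Ioc] with x hx
    exact hCG x (Set.Ioc_subset_Icc_self hx)
  have hfeq : ∀ᵐ x ∂(volume.restrict (Set.Ioc a b)), f x = f a + F x := by
    filter_upwards [ae_restrict_mem measurableSet_Ioc] with x hx
    exact hf x (Set.Ioc_subset_Icc_self hx)
  have hgeq : ∀ᵐ x ∂(volume.restrict (Set.Ioc a b)), g x = g a + G x := by
    filter_upwards [ae_restrict_mem measurableSet_Ioc] with x hx
    exact hg x (Set.Ioc_subset_Icc_self hx)
  -- integrability of the various products
  have IFg' : IntegrableOn (fun x => F x * g' x) (Set.Ioc a b) :=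
    Integrable.bdd_mul hg' hFm hFbd
  have If'G : IntegrableOn (fun x => f' x * G x) (Set.Ioc a b) := by
    have := Integrable.bdd_mul hf' hGm hGbd
    exact this.congr (by filter_upwards with x using mul_comm _ _)
  have Ifg' : IntegrableOn (fun x => f x * g' x) (Set.Ioc a b) := by
    refine (Integrable.bdd_mul (c := ‖f a‖ + CF) hg' ((hFm.const_add (f a)).congr ?_) ?_)
    · filter_upwards [hfeq] with x hx using hx.symm
    · filter_upwards [hfeq, hFbd] with x hx h2
      rw [hx]
      exact (norm_add_le _ _).trans (by gcongr)
  have If'g : IntegrableOn (fun x => f' x * g x) (Set.Ioc a b) := by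
    have : IntegrableOn (fun x => g x * f' x) (Set.Ioc a b) := by
      refine (Integrable.bdd_mul (c := ‖g a‖ + CG) hf' ((hGm.const_add (g a)).congr ?_) ?_)
      · filter_upwards [hgeq] with x hx using hx.symm
      · filter_upwards [hgeq, hGbd] with x hx h2
        rw [hx]
        exact (norm_add_le _ _).trans (by gcongr)
    exact this.congr (by filter_upwards with x using mul_comm _ _)
  -- the Fubini step
  have hΦint : Integrable (Function.uncurry fun x y => f' x * (Set.Ioc a x).indicator g' y)
      ((volume.restrict (Set.Ioc a b)).prod (volume.restrict (Set.Ioc a b))) := by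
    have hψ : Integrable (fun p : ℝ × ℝ => f' p.1 * g' p.2)
        ((volume.restrict (Set.Ioc a b)).prod (volume.restrict (Set.Ioc a b))) :=
      hf'.mul_prod hg'
    have hS : MeasurableSet {p : ℝ × ℝ | a < p.2 ∧ p.2 ≤ p.1} :=
      (measurableSet_lt measurable_const measurable_snd).inter
        (measurableSet_le measurable_snd measurable_fst)
    have heq : (Function.uncurry fun x y => f' x * (Set.Ioc a x).indicator g' y)
        = {p : ℝ × ℝ | a < p.2 ∧ p.2 ≤ p.1}.indicator (fun p => f' p.1 * g' p.2) := by
      ext p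
      simp only [Function.uncurry, Set.indicator_apply, Set.mem_Ioc, Set.mem_setOf_eq]
      split_ifs <;> simp
    rw [heq]
    exact hψ.indicator hS
  have step1 : ∫ x in Set.Ioc a b, f' x * G x
      = ∫ x in Set.Ioc a b, ∫ y in Set.Ioc a b, f' x * (Set.Ioc a x).indicator g' y := by
    refine (setIntegral_congr_fun measurableSet_Ioc (fun x hx => ?_)).symm
    rw [MeasureTheory.integral_const_mul, setIntegral_indicator measurableSet_Ioc,
      Set.Ioc_inter_Ioc, max_self, min_eq_right hx.2]
  have step3 : ∀ y ∈ Set.Ioc a b,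
      (∫ x in Set.Ioc a b, f' x * (Set.Ioc a x).indicator g' y) = g' y * (F b - F y) := by
    intro y hy
    have hpt : (fun x => f' x * (Set.Ioc a x).indicator g' y)
        = fun x => (Set.Ici y).indicator (fun x => f' x * g' y) x := by
      ext x
      simp only [Set.indicator_apply, Set.mem_Ioc, Set.mem_Ici]
      by_cases h : y ≤ x
      · simp [h, hy.1]
      · simp [h]
    have hset : Set.Ioc a b ∩ Set.Ici y = Set.Icc y b := by
      ext z
      simp only [Set.mem_inter_iff, Set.mem_Ioc, Set.mem_Ici, Set.mem_Icc]
      constructor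
      · rintro ⟨⟨_, h2⟩, h3⟩; exact ⟨h3, h2⟩
      · rintro ⟨h1, h2⟩; exact ⟨⟨lt_of_lt_of_le hy.1 h1, h2⟩, h1⟩
    have hsplit : F b = F y + ∫ s in Set.Ioc y b, f' s := by
      rw [hF]
      rw [← setIntegral_union (Set.Ioc_disjoint_Ioc_of_le le_rfl) measurableSet_Ioc
        (hf'.mono_set (Set.Ioc_subset_Ioc_right hy.2))
        (hf'.mono_set (Set.Ioc_subset_Ioc_left (le_of_lt hy.1))),
        Set.Ioc_union_Ioc_eq_Ioc (le_of_lt hy.1) hy.2]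
    rw [hpt, setIntegral_indicator measurableSet_Ici, hset,
      MeasureTheory.integral_mul_const, integral_Icc_eq_integral_Ioc]
    rw [hsplit]
    ring
  have key : (∫ x in Set.Ioc a b, f' x * G x)
      = ∫ y in Set.Ioc a b, g' y * (F b - F y) := by
    rw [step1, integral_integral_swap hΦint]
    exact setIntegral_congr_fun measurableSet_Ioc step3
  -- integrability of g' * (F b - F ·)
  have IkeyR : IntegrableOn (fun y => g' y * (F b - F y)) (Set.Ioc a b) := by
    have h1 : IntegrableOn (fun y => g' y * F b) (Set.Ioc a b) := hg'.mul_const _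
    have h2 : IntegrableOn (fun y => g' y * F y) (Set.Ioc a b) :=
      IFg'.congr (by filter_upwards with x using mul_comm _ _)
    exact (h1.sub h2).congr (by filter_upwards with x; simp only [Pi.sub_apply]; ring)
  -- final assembly
  have hfb : f b = f a + F b := hf b ⟨hab, le_rfl⟩
  have hgb : g b = g a + G b := hg b ⟨hab, le_rfl⟩
  have e1 : ∫ x in Set.Ioc a b, (f x * g' x + f' x * g x)
      = (∫ x in Set.Ioc a b, f x * g' x) + ∫ x in Set.Ioc a b, f' x * g x :=
    integral_add Ifg' If'g
  have e2 : ∫ x in Set.Ioc a b, f x * g' x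
      = f a * G b + ∫ x in Set.Ioc a b, F x * g' x := by
    have : ∫ x in Set.Ioc a b, f x * g' x
        = ∫ x in Set.Ioc a b, (f a * g' x + F x * g' x) := by
      refine integral_congr_ae ?_
      filter_upwards [hfeq] with x hx
      rw [hx]; ring
    rw [this, integral_add (hg'.const_mul _) IFg', MeasureTheory.integral_const_mul]
  have e3 : ∫ x in Set.Ioc a b, f' x * g x
      = g a * F b + ∫ x in Set.Ioc a b, f' x * G x := by
    have : ∫ x in Set.Ioc a b, f' x * g x
        = ∫ x in Set.Ioc a b, (f' x * g a + f' x * G x) := by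
      refine integral_congr_ae ?_
      filter_upwards [hgeq] with x hx
      rw [hx]; ring
    rw [this, integral_add (hf'.mul_const _) If'G, MeasureTheory.integral_mul_const]
    simp only [hF]
    ring
  have e4 : (∫ x in Set.Ioc a b, F x * g' x) + ∫ x in Set.Ioc a b, f' x * G x
      = F b * G b := by
    rw [key, ← integral_add IFg' IkeyR]
    have : ∫ x in Set.Ioc a b, (F x * g' x + g' x * (F b - F x))
        = ∫ x in Set.Ioc a b, g' x * F b := by
      refine integral_congr_ae ?_
      filter_upwards with x
      ring
    rw [this, MeasureTheory.integral_mul_const]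
    rw [hG]
    ring
  rw [e1, e2, e3, hfb, hgb]
  linear_combination e4

theorem ftc_pow {u g : ℝ → ℝ} {T : ℝ} (hT : 0 ≤ T)
    (hg : IntegrableOn g (Set.Icc 0 T))
    (hu : ∀ x ∈ Set.Icc (0:ℝ) T, u x = u 0 + ∫ s in (0:ℝ)..x, g s)
    (k : ℕ) :
    ∀ a ∈ Set.Icc (0:ℝ) T, ∀ b ∈ Set.Icc (0:ℝ) T, a ≤ b →
      u b ^ k - u a ^ k = ∫ s in Set.Ioc a b, ((k:ℝ) * u s ^ (k-1) * g s) := by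
  -- representation with arbitrary base point
  have hii : ∀ x ∈ Set.Icc (0:ℝ) T, IntervalIntegrable g volume 0 x := by
    intro x hx
    rw [intervalIntegrable_iff_integrableOn_Ioc_of_le hx.1]
    exact hg.mono_set (Set.Ioc_subset_Icc_self.trans (Set.Icc_subset_Icc le_rfl hx.2))
  have hrep : ∀ a ∈ Set.Icc (0:ℝ) T, ∀ x ∈ Set.Icc (0:ℝ) T, a ≤ x →
      u x = u a + ∫ s in Set.Ioc a x, g s := by
    intro a ha x hx hax
    have h1 := hu a ha
    have h2 := hu x hx
    have hadd : (∫ s in (0:ℝ)..a, g s) + (∫ s in a..x, g s) = ∫ s in (0:ℝ)..x, g s := by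
      apply intervalIntegral.integral_add_adjacent_intervals (hii a ha)
      rw [intervalIntegrable_iff_integrableOn_Ioc_of_le hax]
      exact hg.mono_set ((Set.Ioc_subset_Icc_self).trans (Set.Icc_subset_Icc ha.1 hx.2))
    rw [← intervalIntegral.integral_of_le hax, h1, h2, ← hadd]
    ring
  -- continuity and boundedness of u on [0,T]
  set uc : ℝ → ℝ := fun x => u 0 + ∫ s in Set.Ioc 0 x, g s with huc
  have hucc : ContinuousOn uc (Set.Icc 0 T) :=
    (continuousOn_const.add (intervalIntegral.continuousOn_primitive hg))
  have hueq : ∀ x ∈ Set.Icc (0:ℝ) T, u x = uc x := by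
    intro x hx
    rw [hu x hx, huc, intervalIntegral.integral_of_le hx.1]
  obtain ⟨C, hC⟩ := isCompact_Icc.exists_bound_of_continuousOn hucc
  have hCu : ∀ x ∈ Set.Icc (0:ℝ) T, ‖u x‖ ≤ C := fun x hx => (hueq x hx) ▸ hC x hx
  have hC0 : (0:ℝ) ≤ C := le_trans (norm_nonneg _) (hC 0 ⟨le_rfl, hT⟩)
  -- integrability helper
  have hint : ∀ (m : ℕ) (c : ℝ) (a b : ℝ), 0 ≤ a → b ≤ T →
      IntegrableOn (fun s => c * u s ^ m * g s) (Set.Ioc a b) := by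
    intro m c a b ha hb
    have hsub : Set.Ioc a b ⊆ Set.Icc 0 T :=
      Set.Ioc_subset_Icc_self.trans (Set.Icc_subset_Icc ha hb)
    have hgab : IntegrableOn g (Set.Ioc a b) := hg.mono_set hsub
    refine Integrable.bdd_mul (c := |c| * C ^ m) hgab ?_ ?_
    · have : AEStronglyMeasurable (fun s => c * uc s ^ m) (volume.restrict (Set.Ioc a b)) :=
        ((continuousOn_const.mul ((hucc.mono hsub).pow m)).aestronglyMeasurable
          measurableSet_Ioc)
      refine this.congr ?_
      filter_upwards [ae_restrict_mem measurableSet_Ioc] with x hx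
      rw [hueq x (hsub hx)]
    · filter_upwards [ae_restrict_mem measurableSet_Ioc] with x hx
      have hb := hCu x (hsub hx)
      rw [Real.norm_eq_abs] at hb ⊢
      calc |c * u x ^ m| = |c| * |u x| ^ m := by rw [abs_mul, abs_pow]
        _ ≤ |c| * C ^ m :=
          mul_le_mul_of_nonneg_left (pow_le_pow_left₀ (abs_nonneg _) hb m) (abs_nonneg c)
  -- induction
  induction k with
  | zero => intro a _ b _ _; simp
  | succ k ih =>
    intro a ha b hb hab
    have hsub : Set.Ioc a b ⊆ Set.Icc 0 T :=
      Set.Ioc_subset_Icc_self.trans (Set.Icc_subset_Icc ha.1 hb.2)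
    have hmem : ∀ x ∈ Set.Icc a b, x ∈ Set.Icc (0:ℝ) T :=
      fun x hx => ⟨le_trans ha.1 hx.1, le_trans hx.2 hb.2⟩
    have hmul := ftc_mul (f := u) (g := fun s => u s ^ k) (f' := g)
      (g' := fun s => (k:ℝ) * u s ^ (k-1) * g s) hab
      (hg.mono_set hsub) (hint (k-1) (k:ℝ) a b ha.1 hb.2)
      (fun x hx => hrep a ha x (hmem x hx) hx.1)
      (fun x hx => by
        have := ih a ha x (hmem x hx) hx.1
        linarith)
    have hcongr : ∫ x in Set.Ioc a b,
          (u x * ((k:ℝ) * u x ^ (k-1) * g x) + g x * u x ^ k)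
        = ∫ s in Set.Ioc a b, (((k+1 : ℕ) : ℝ) * u s ^ (k + 1 - 1) * g s) := by
      refine setIntegral_congr_fun measurableSet_Ioc (fun x _ => ?_)
      rcases k with _ | k'
      · simp
      · simp only [Nat.add_sub_cancel]
        push_cast
        ring
    calc u b ^ (k+1) - u a ^ (k+1)
        = u b * u b ^ k - u a * u a ^ k := by rw [pow_succ, pow_succ]; ring
      _ = ∫ x in Set.Ioc a b, (u x * ((k:ℝ) * u x ^ (k-1) * g x) + g x * u x ^ k) := hmul.symm
      _ = ∫ s in Set.Ioc a b, (((k+1 : ℕ) : ℝ) * u s ^ (k + 1 - 1) * g s) := hcongr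


theorem kernel_ineq {α t : ℝ} (hα : 0 < α) (ht : 0 < t)
    {g : ℝ → ℝ} (hg : IntegrableOn g (Set.Ioo 0 t))
    (hker : IntegrableOn (fun s => g s * (t - s) ^ (-α)) (Set.Ioo 0 t))
    (hneg : ∀ r ∈ Set.Ico (0:ℝ) t, (∫ s in Set.Ioo r t, g s) ≤ 0) :
    (∫ s in Set.Ioo 0 t, g s * (t - s) ^ (-α)) ≤ 0 := by
  -- the kernel identity
  have hkid : ∀ s ∈ Set.Ioo (0:ℝ) t,
      (∫ r in Set.Ioo (0:ℝ) s, α * (t - r) ^ (-α-1)) = (t - s) ^ (-α) - t ^ (-α) := by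
    intro s hs
    have hderiv : ∀ x ∈ Set.uIcc (0:ℝ) s,
        HasDerivAt (fun r => (t - r) ^ (-α)) (α * (t - x) ^ (-α-1)) x := by
      intro x hx
      rw [Set.uIcc_of_le (le_of_lt hs.1)] at hx
      have hpos : 0 < t - x := by
        have := hx.2; have := hs.2; linarith
      have h1 : HasDerivAt (fun r : ℝ => t - r) (-1) x := (hasDerivAt_id x).const_sub t
      have h2 : HasDerivAt (fun y : ℝ => y ^ (-α)) (-α * (t - x) ^ (-α - 1)) (t - x) :=
        Real.hasDerivAt_rpow_const (Or.inl (ne_of_gt hpos))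
      have := h2.comp x h1
      exact this.congr_deriv (by ring)
    have hcont : ContinuousOn (fun x => α * (t - x) ^ (-α-1)) (Set.uIcc (0:ℝ) s) := by
      apply ContinuousOn.mul continuousOn_const
      apply ContinuousOn.rpow_const ((continuous_sub_left t).continuousOn)
      intro x hx
      rw [Set.uIcc_of_le (le_of_lt hs.1)] at hx
      exact Or.inl (ne_of_gt (by have := hx.2; have := hs.2; linarith))
    have := intervalIntegral.integral_eq_sub_of_hasDerivAt hderiv
      (hcont.intervalIntegrable)
    rw [intervalIntegral.integral_of_le (le_of_lt hs.1)] at this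
    rw [← MeasureTheory.integral_Ioc_eq_integral_Ioo]
    rw [this]
    simp
  have hw : ∀ r ∈ Set.Ioo (0:ℝ) t, (0:ℝ) ≤ α * (t - r) ^ (-α-1) := by
    intro r hr
    have : (0:ℝ) < t - r := by have := hr.2; linarith
    positivity
  -- splitting
  have E1 : IntegrableOn (fun s => g s * t ^ (-α)) (Set.Ioo 0 t) := hg.mul_const _
  have E2 : IntegrableOn (fun s => g s * ((t - s) ^ (-α) - t ^ (-α))) (Set.Ioo 0 t) :=
    (hker.sub E1).congr (by filter_upwards with x; simp only [Pi.sub_apply]; ring)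
  have hsplit : (∫ s in Set.Ioo 0 t, g s * (t - s) ^ (-α))
      = (∫ s in Set.Ioo 0 t, g s * t ^ (-α))
        + ∫ s in Set.Ioo 0 t, g s * ((t - s) ^ (-α) - t ^ (-α)) := by
    rw [← integral_add E1 E2]
    exact setIntegral_congr_fun measurableSet_Ioo (fun s _ => by ring)
  have hb1 : (∫ s in Set.Ioo 0 t, g s * t ^ (-α)) ≤ 0 := by
    rw [MeasureTheory.integral_mul_const]
    exact mul_nonpos_of_nonpos_of_nonneg (hneg 0 ⟨le_rfl, ht⟩)
      (Real.rpow_nonneg (le_of_lt ht) _)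
  -- Fubini on the second piece
  set Φ : ℝ → ℝ → ℝ :=
    fun s r => (Set.Ioo (0:ℝ) s).indicator (fun r' => g s * (α * (t - r') ^ (-α-1))) r with hΦ
  have hS : MeasurableSet {p : ℝ × ℝ | 0 < p.2 ∧ p.2 < p.1} :=
    (measurableSet_lt measurable_const measurable_snd).inter
      (measurableSet_lt measurable_snd measurable_fst)
  have hwm : AEStronglyMeasurable (fun r => α * (t - r) ^ (-α-1))
      (volume.restrict (Set.Ioo 0 t)) := by
    apply ContinuousOn.aestronglyMeasurable _ measurableSet_Ioo
    apply ContinuousOn.mul continuousOn_const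
    apply ContinuousOn.rpow_const ((continuous_sub_left t).continuousOn)
    intro x hx
    exact Or.inl (ne_of_gt (by have := hx.2; linarith))
  have hunc : (Function.uncurry Φ)
      = {p : ℝ × ℝ | 0 < p.2 ∧ p.2 < p.1}.indicator
          (fun p => g p.1 * (α * (t - p.2) ^ (-α-1))) := by
    ext p
    simp only [Function.uncurry, hΦ, Set.indicator_apply, Set.mem_Ioo, Set.mem_setOf_eq]
  have hΦm : AEStronglyMeasurable (Function.uncurry Φ)
      ((volume.restrict (Set.Ioo 0 t)).prod (volume.restrict (Set.Ioo 0 t))) := by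
    rw [hunc]
    exact ((hg.aestronglyMeasurable.comp_fst).mul hwm.comp_snd).indicator hS
  have hsec : ∀ s ∈ Set.Ioo (0:ℝ) t,
      IntegrableOn (fun r => g s * (α * (t - r) ^ (-α-1))) (Set.Ioo 0 s) := by
    intro s hs
    apply IntegrableOn.mono_set _ Set.Ioo_subset_Icc_self
    apply ContinuousOn.integrableOn_Icc
    apply ContinuousOn.mul continuousOn_const
    apply ContinuousOn.mul continuousOn_const
    apply ContinuousOn.rpow_const ((continuous_sub_left t).continuousOn)
    intro x hx
    exact Or.inl (ne_of_gt (by have := hx.2; have := hs.2; simp at hx ⊢; linarith))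
  have hΦint : Integrable (Function.uncurry Φ)
      ((volume.restrict (Set.Ioo 0 t)).prod (volume.restrict (Set.Ioo 0 t))) := by
    rw [MeasureTheory.integrable_prod_iff hΦm]
    constructor
    · filter_upwards [ae_restrict_mem measurableSet_Ioo] with s hs
      have : Integrable ((Set.Ioo (0:ℝ) s).indicator (fun r' => g s * (α * (t - r') ^ (-α-1))))
          (volume.restrict (Set.Ioo 0 t)) := by
        rw [integrable_indicator_iff measurableSet_Ioo]
        rw [IntegrableOn, Measure.restrict_restrict measurableSet_Ioo]
        have : Set.Ioo (0:ℝ) s ∩ Set.Ioo (0:ℝ) t = Set.Ioo 0 s := by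
          rw [Set.Ioo_inter_Ioo, max_self, min_eq_left (le_of_lt hs.2)]
        rw [this]
        exact hsec s hs
      exact this
    · -- the norm-integral function is dominated by |g| * kernel
      have haesm : AEStronglyMeasurable
          (fun s => ∫ r, ‖Φ s r‖ ∂(volume.restrict (Set.Ioo 0 t)))
          (volume.restrict (Set.Ioo 0 t)) := hΦm.norm.integral_prod_right'
      apply Integrable.mono' hker.norm haesm
      filter_upwards [ae_restrict_mem measurableSet_Ioo] with s hs
      have hval : (∫ r, ‖Φ s r‖ ∂(volume.restrict (Set.Ioo 0 t)))
          = ‖g s‖ * ((t - s) ^ (-α) - t ^ (-α)) := by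
        have h1 : ∀ r, ‖Φ s r‖
            = (Set.Ioo (0:ℝ) s).indicator (fun r' => ‖g s‖ * (α * (t - r') ^ (-α-1))) r := by
          intro r
          simp only [hΦ]
          by_cases h : r ∈ Set.Ioo (0:ℝ) s
          · rw [Set.indicator_of_mem h, Set.indicator_of_mem h, norm_mul]
            congr 1
            rw [Real.norm_eq_abs, abs_of_nonneg]
            apply hw
            exact ⟨h.1, lt_trans h.2 hs.2⟩
          · rw [Set.indicator_of_notMem h, Set.indicator_of_notMem h, norm_zero]
        simp_rw [h1]
        rw [integral_indicator measurableSet_Ioo, Measure.restrict_restrict measurableSet_Ioo]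
        have : Set.Ioo (0:ℝ) s ∩ Set.Ioo (0:ℝ) t = Set.Ioo 0 s := by
          rw [Set.Ioo_inter_Ioo, max_self, min_eq_left (le_of_lt hs.2)]
        rw [this, MeasureTheory.integral_const_mul, hkid s hs]
      rw [hval]
      have hdiff : 0 ≤ (t - s) ^ (-α) - t ^ (-α) := by
        rw [← hkid s hs]
        apply setIntegral_nonneg measurableSet_Ioo
        intro r hr'
        exact hw r ⟨hr'.1, lt_trans hr'.2 hs.2⟩
      rw [Real.norm_eq_abs, abs_of_nonneg (mul_nonneg (norm_nonneg _) hdiff)]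
      have h2 : (t - s) ^ (-α) - t ^ (-α) ≤ (t - s) ^ (-α) := by
        have : (0:ℝ) ≤ t ^ (-α) := Real.rpow_nonneg (le_of_lt ht) _
        linarith
      calc ‖g s‖ * ((t - s) ^ (-α) - t ^ (-α)) ≤ ‖g s‖ * (t - s) ^ (-α) := by
            apply mul_le_mul_of_nonneg_left h2 (norm_nonneg _)
        _ = ‖g s * (t - s) ^ (-α)‖ := by
            rw [norm_mul]
            congr 1
            rw [Real.norm_eq_abs, abs_of_nonneg]
            exact Real.rpow_nonneg (by have := hs.2; linarith) _
  -- identify the second piece with the double integral and swap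
  have hid2 : (∫ s in Set.Ioo 0 t, g s * ((t - s) ^ (-α) - t ^ (-α)))
      = ∫ s in Set.Ioo 0 t, ∫ r in Set.Ioo 0 t, Φ s r := by
    refine setIntegral_congr_fun measurableSet_Ioo (fun s hs => ?_)
    simp only [hΦ]
    rw [integral_indicator measurableSet_Ioo, Measure.restrict_restrict measurableSet_Ioo]
    have : Set.Ioo (0:ℝ) s ∩ Set.Ioo (0:ℝ) t = Set.Ioo 0 s := by
      rw [Set.Ioo_inter_Ioo, max_self, min_eq_left (le_of_lt hs.2)]
    rw [this, MeasureTheory.integral_const_mul, hkid s hs]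
  have hswap : (∫ s in Set.Ioo 0 t, ∫ r in Set.Ioo 0 t, Φ s r)
      = ∫ r in Set.Ioo 0 t, ∫ s in Set.Ioo 0 t, Φ s r := integral_integral_swap hΦint
  have hb2 : (∫ r in Set.Ioo 0 t, ∫ s in Set.Ioo 0 t, Φ s r) ≤ 0 := by
    apply setIntegral_nonpos_of_ae_restrict
    filter_upwards [ae_restrict_mem measurableSet_Ioo] with r hr
    have h1 : ∀ s, Φ s r = (Set.Ioi r).indicator (fun s => g s * (α * (t - r) ^ (-α-1))) s := by
      intro s
      simp only [hΦ, Set.indicator_apply, Set.mem_Ioo, Set.mem_Ioi]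
      by_cases h : r < s
      · simp [h, hr.1]
      · simp [h]
    simp_rw [h1]
    rw [integral_indicator measurableSet_Ioi, Measure.restrict_restrict measurableSet_Ioi]
    have : Set.Ioi r ∩ Set.Ioo (0:ℝ) t = Set.Ioo r t := by
      ext z
      simp only [Set.mem_inter_iff, Set.mem_Ioi, Set.mem_Ioo]
      constructor
      · rintro ⟨h1', ⟨_, h3⟩⟩; exact ⟨h1', h3⟩
      · rintro ⟨h1', h2'⟩; exact ⟨h1', lt_trans hr.1 h1', h2'⟩
    rw [this, MeasureTheory.integral_mul_const]
    exact mul_nonpos_of_nonpos_of_nonneg (hneg r ⟨le_of_lt hr.1, hr.2⟩) (hw r hr)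
  linarith [hsplit, hb1, hid2 ▸ hswap ▸ hb2]


theorem pow_tangent_ineq {A x : ℝ} (hA : 0 ≤ A) (hx : 0 ≤ x) (n : ℕ) :
    A ^ n - x ^ n ≤ n * A ^ (n-1) * (A - x) := by
  have hfact := geom_sum₂_mul A x n
  rcases le_total x A with h | h
  · have hsum : (∑ i ∈ Finset.range n, A ^ i * x ^ (n - 1 - i)) ≤ n * A ^ (n-1) := by
      have := Finset.sum_le_card_nsmul (Finset.range n)
        (fun i => A ^ i * x ^ (n - 1 - i)) (A ^ (n-1)) (fun i hi => by
          have hin : i ≤ n - 1 := Nat.le_sub_one_of_lt (Finset.mem_range.1 hi)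
          calc A ^ i * x ^ (n - 1 - i) ≤ A ^ i * A ^ (n - 1 - i) := by
                exact mul_le_mul_of_nonneg_left (pow_le_pow_left₀ hx h _) (pow_nonneg hA _)
            _ = A ^ (n - 1) := by rw [← pow_add, Nat.add_sub_cancel' hin])
      simpa [nsmul_eq_mul] using this
    calc A ^ n - x ^ n = (∑ i ∈ Finset.range n, A ^ i * x ^ (n - 1 - i)) * (A - x) := hfact.symm
      _ ≤ (n * A ^ (n-1)) * (A - x) :=
          mul_le_mul_of_nonneg_right hsum (sub_nonneg.2 h)
      _ = n * A ^ (n-1) * (A - x) := by ring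
  · have hsum : (n : ℝ) * A ^ (n-1) ≤ ∑ i ∈ Finset.range n, A ^ i * x ^ (n - 1 - i) := by
      have := Finset.card_nsmul_le_sum (Finset.range n)
        (fun i => A ^ i * x ^ (n - 1 - i)) (A ^ (n-1)) (fun i hi => by
          have hin : i ≤ n - 1 := Nat.le_sub_one_of_lt (Finset.mem_range.1 hi)
          calc A ^ (n - 1) = A ^ i * A ^ (n - 1 - i) := by
                rw [← pow_add, Nat.add_sub_cancel' hin]
            _ ≤ A ^ i * x ^ (n - 1 - i) :=
                mul_le_mul_of_nonneg_left (pow_le_pow_left₀ hA h _) (pow_nonneg hA _))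
      simpa [nsmul_eq_mul] using this
    calc A ^ n - x ^ n = (∑ i ∈ Finset.range n, A ^ i * x ^ (n - 1 - i)) * (A - x) := hfact.symm
      _ ≤ (n * A ^ (n-1)) * (A - x) :=
          mul_le_mul_of_nonpos_right hsum (sub_nonpos.2 h)
      _ = n * A ^ (n-1) * (A - x) := by ring


end AuxLemmas

open Set Metric Topology

/-- Lemma 2.4: for `0 < α < 1`, `n ≥ 2` and `u ≥ 0` absolutely continuous on
`[0,T]`, `u^{n-1}(t) ∂_t^α u(t) ≥ (1/n) ∂_t^α (u^n)(t)` for all `t ∈ (0,T]`. -/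
theorem caputo_pow_inequality
    (α T : ℝ) (hα : 0 < α) (hα1 : α < 1) (hT : 0 < T)
    (n : ℕ) (hn : 2 ≤ n)
    (u : ℝ → ℝ) (hupos : ∀ t ∈ Set.Icc (0:ℝ) T, 0 ≤ u t) (hu : AbsCont u T) :
    ∀ t, 0 < t → t ≤ T →
      (1 / (n : ℝ)) * caputo α (fun s => u s ^ n) t ≤ u t ^ (n - 1) * caputo α u t := by
  obtain ⟨hDint, hrep⟩ := hu
  intro t ht0 htT
  have hT0 : (0:ℝ) ≤ T := le_of_lt hT
  have hnR : (0:ℝ) < (n:ℝ) := by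
    have : (0:ℕ) < n := lt_of_lt_of_le (by norm_num) hn
    exact_mod_cast this
  have hn1 : (1:ℕ) ≤ n - 1 := by omega
  have hc : 0 < 1 / Real.Gamma (1 - α) := by
    have := Real.Gamma_pos_of_pos (by linarith : (0:ℝ) < 1 - α)
    positivity
  have htmem : t ∈ Set.Icc (0:ℝ) T := ⟨le_of_lt ht0, htT⟩
  have hsub0 : Set.Ioo (0:ℝ) t ⊆ Set.Icc (0:ℝ) T :=
    fun x hx => ⟨le_of_lt hx.1, le_trans (le_of_lt hx.2) htT⟩
  -- continuity and boundedness of u on [0,T]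
  set uc : ℝ → ℝ := fun x => u 0 + ∫ s in Set.Ioc 0 x, deriv u s with huc
  have hucc : ContinuousOn uc (Set.Icc 0 T) :=
    continuousOn_const.add (intervalIntegral.continuousOn_primitive hDint)
  have hueq : ∀ x ∈ Set.Icc (0:ℝ) T, u x = uc x := fun x hx => by
    rw [hrep x hx, huc, intervalIntegral.integral_of_le hx.1]
  obtain ⟨C, hC⟩ := isCompact_Icc.exists_bound_of_continuousOn hucc
  have hCu : ∀ x ∈ Set.Icc (0:ℝ) T, |u x| ≤ C := fun x hx => by
    rw [hueq x hx, ← Real.norm_eq_abs]; exact hC x hx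
  have hC0 : (0:ℝ) ≤ C := le_trans (norm_nonneg _) (hC 0 ⟨le_rfl, hT0⟩)
  -- a.e. differentiability of u on (0,t)
  have hae : ∀ᵐ s, s ∈ Set.Ioo (0:ℝ) t → HasDerivAt u (deriv u s) s := by
    set G : ℝ → ℝ := (Set.Icc (0:ℝ) T).indicator (deriv u) with hG
    have hGint : Integrable G := (integrable_indicator_iff measurableSet_Icc).2 hDint
    filter_upwards [ae_hasDerivAt_primitive G hGint] with s hs hmem
    have hsT : s ∈ Set.Ioo (0:ℝ) T := ⟨hmem.1, lt_of_lt_of_le hmem.2 htT⟩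
    have hev : (fun r => u 0 + ∫ x in (0:ℝ)..r, G x) =ᶠ[nhds s] u := by
      filter_upwards [Ioo_mem_nhds hsT.1 hsT.2] with r hr
      have hGr : ∫ x in (0:ℝ)..r, G x = ∫ x in (0:ℝ)..r, deriv u x := by
        apply intervalIntegral.integral_congr
        intro y hy
        rw [Set.uIcc_of_le (le_of_lt hr.1)] at hy
        have hyT : y ∈ Set.Icc (0:ℝ) T := ⟨hy.1, le_trans hy.2 (le_of_lt hr.2)⟩
        exact Set.indicator_of_mem hyT _
      rw [hGr, ← hrep r ⟨le_of_lt hr.1, le_of_lt hr.2⟩]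
    have hd : HasDerivAt u (G s) s := (hs.const_add (u 0)).congr_of_eventuallyEq hev.symm
    have hGs : G s = deriv u s := Set.indicator_of_mem (hsub0 hmem) _
    rw [hGs] at hd
    rw [hd.deriv]
    exact hd
  have haepow : ∀ᵐ s, s ∈ Set.Ioo (0:ℝ) t →
      deriv (fun x => u x ^ n) s = (n:ℝ) * u s ^ (n - 1) * deriv u s := by
    filter_upwards [hae] with s hs hmem
    exact ((hs hmem).pow n).deriv
  -- integrability of the pointwise chain-rule expression
  have haesm_pow : AEStronglyMeasurable (fun s => (n:ℝ) * u s ^ (n-1))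
      (volume.restrict (Set.Ioo 0 t)) := by
    have h0 : AEStronglyMeasurable (fun s => (n:ℝ) * uc s ^ (n-1))
        (volume.restrict (Set.Ioo 0 t)) :=
      (continuousOn_const.mul ((hucc.mono hsub0).pow _)).aestronglyMeasurable measurableSet_Ioo
    apply h0.congr
    filter_upwards [ae_restrict_mem measurableSet_Ioo] with x hx
    rw [hueq x (hsub0 hx)]
  have hbd_pow : ∀ᵐ x ∂(volume.restrict (Set.Ioo 0 t)),
      ‖(n:ℝ) * u x ^ (n-1)‖ ≤ (n:ℝ) * C ^ (n-1) := by
    filter_upwards [ae_restrict_mem measurableSet_Ioo] with x hx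
    rw [Real.norm_eq_abs, abs_mul, abs_pow, Nat.abs_cast]
    exact mul_le_mul_of_nonneg_left
      (pow_le_pow_left₀ (abs_nonneg _) (hCu x (hsub0 hx)) _) (le_of_lt hnR)
  have hIpow : IntegrableOn (fun s => (n:ℝ) * u s ^ (n - 1) * deriv u s) (Set.Ioo 0 t) :=
    Integrable.bdd_mul (hDint.mono_set hsub0) haesm_pow hbd_pow
  have hIpow' : IntegrableOn (deriv (fun x => u x ^ n)) (Set.Ioo 0 t) := by
    apply hIpow.congr
    filter_upwards [ae_restrict_of_ae haepow, ae_restrict_mem measurableSet_Ioo] with x hx hm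
    exact (hx hm).symm
  -- fundamental theorem of calculus statements
  have hftc1 : ∀ r ∈ Set.Ico (0:ℝ) t, (∫ s in Set.Ioo r t, deriv u s) = u t - u r := by
    intro r hr
    have hrT : r ∈ Set.Icc (0:ℝ) T := ⟨hr.1, le_trans (le_of_lt hr.2) htT⟩
    have h := ftc_pow hT0 hDint hrep 1 r hrT t htmem (le_of_lt hr.2)
    rw [← MeasureTheory.integral_Ioc_eq_integral_Ioo]
    have h2 : ∫ s in Set.Ioc r t, deriv u s
        = ∫ s in Set.Ioc r t, (((1:ℕ):ℝ) * u s ^ (1-1) * deriv u s) :=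
      setIntegral_congr_fun measurableSet_Ioc (fun x _ => by norm_num)
    rw [h2, ← h]
    simp [pow_one]
  have hftcn : ∀ r ∈ Set.Ico (0:ℝ) t,
      (∫ s in Set.Ioo r t, deriv (fun x => u x ^ n) s) = u t ^ n - u r ^ n := by
    intro r hr
    have hrT : r ∈ Set.Icc (0:ℝ) T := ⟨hr.1, le_trans (le_of_lt hr.2) htT⟩
    have hcg : ∫ s in Set.Ioo r t, deriv (fun x => u x ^ n) s
        = ∫ s in Set.Ioo r t, ((n:ℝ) * u s ^ (n-1) * deriv u s) := by
      refine integral_congr_ae ?_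
      filter_upwards [ae_restrict_of_ae haepow, ae_restrict_mem measurableSet_Ioo] with x hx hm
      exact hx ⟨lt_of_le_of_lt hr.1 hm.1, hm.2⟩
    rw [hcg, ← MeasureTheory.integral_Ioc_eq_integral_Ioo,
      ← ftc_pow hT0 hDint hrep n r hrT t htmem (le_of_lt hr.2)]
  -- h1 implies h2
  have himp1 : IntegrableOn (fun s => deriv u s * (t - s) ^ (-α)) (Set.Ioo 0 t) →
      IntegrableOn (fun s => deriv (fun x => u x ^ n) s * (t - s) ^ (-α)) (Set.Ioo 0 t) := by
    intro h1
    have h := Integrable.bdd_mul h1 haesm_pow hbd_pow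
    apply h.congr
    filter_upwards [ae_restrict_of_ae haepow, ae_restrict_mem measurableSet_Ioo] with x hx hm
    rw [hx hm]; ring
  by_cases h2 : IntegrableOn (fun s => deriv (fun x => u x ^ n) s * (t - s) ^ (-α))
      (Set.Ioo 0 t)
  swap
  · -- both caputo integrals are junk zero
    have h1 : ¬ IntegrableOn (fun s => deriv u s * (t - s) ^ (-α)) (Set.Ioo 0 t) :=
      fun hh => h2 (himp1 hh)
    simp only [caputo]
    rw [MeasureTheory.integral_undef h2, MeasureTheory.integral_undef h1]
    simp
  rcases eq_or_lt_of_le (hupos t htmem) with hA | hA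
  · -- u t = 0
    have hXle : (∫ s in Set.Ioo 0 t, deriv (fun x => u x ^ n) s * (t - s) ^ (-α)) ≤ 0 := by
      apply kernel_ineq hα ht0 hIpow' h2
      intro r hr
      rw [hftcn r hr, ← hA]
      have : (0:ℝ) ^ n = 0 := zero_pow (by omega)
      rw [this]
      have : (0:ℝ) ≤ u r ^ n := pow_nonneg (hupos r ⟨hr.1, le_trans (le_of_lt hr.2) htT⟩) n
      linarith
    have hR0 : u t ^ (n - 1) = 0 := by
      rw [← hA]
      exact zero_pow (by omega)
    simp only [caputo, hR0, zero_mul]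
    have hcx : (1 / Real.Gamma (1 - α)) *
        (∫ s in Set.Ioo 0 t, deriv (fun x => u x ^ n) s * (t - s) ^ (-α)) ≤ 0 :=
      mul_nonpos_of_nonneg_of_nonpos (le_of_lt hc) hXle
    exact mul_nonpos_of_nonneg_of_nonpos (by positivity) hcx
  · -- u t > 0
    -- first, h2 implies h1 in this case
    have h1 : IntegrableOn (fun s => deriv u s * (t - s) ^ (-α)) (Set.Ioo 0 t) := by
      obtain ⟨δ, hδ0, hδ⟩ := Metric.continuousWithinAt_iff.1 (hucc t htmem) (u t / 2)
        (by linarith)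
      set b : ℝ := max (t/2) (t - δ/2) with hb
      have hb0 : 0 < b := lt_of_lt_of_le (by linarith) (le_max_left _ _)
      have hbt : b < t := max_lt (by linarith) (by linarith)
      have hlow : ∀ x ∈ Set.Ioo b t, u t / 2 ≤ u x := by
        intro x hx
        have hxT : x ∈ Set.Icc (0:ℝ) T :=
          ⟨le_of_lt (lt_trans hb0 hx.1), le_trans (le_of_lt hx.2) htT⟩
        have hdist : dist x t < δ := by
          rw [Real.dist_eq, abs_of_nonpos (by linarith [hx.2])]
          have : t - δ/2 ≤ b := le_max_right _ _
          have := hx.1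
          linarith
        have := hδ hxT hdist
        rw [Real.dist_eq] at this
        have habs := abs_lt.1 this
        rw [← hueq x hxT, ← hueq t htmem] at habs
        linarith [habs.1]
      -- integrability on (0, b]
      have part1 : IntegrableOn (fun s => deriv u s * (t - s) ^ (-α)) (Set.Ioc 0 b) := by
        have hsub1 : Set.Ioc (0:ℝ) b ⊆ Set.Icc (0:ℝ) T :=
          fun x hx => ⟨le_of_lt hx.1, le_trans hx.2 (le_trans (le_of_lt hbt) htT)⟩
        have hKm : AEStronglyMeasurable (fun s => (t - s) ^ (-α))
            (volume.restrict (Set.Ioc 0 b)) := by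
          apply ContinuousOn.aestronglyMeasurable _ measurableSet_Ioc
          apply ContinuousOn.rpow_const ((continuous_sub_left t).continuousOn)
          intro x hx
          exact Or.inl (ne_of_gt (by have := hx.2; linarith))
        have hKbd : ∀ᵐ x ∂(volume.restrict (Set.Ioc 0 b)),
            ‖(t - x) ^ (-α)‖ ≤ (t - b) ^ (-α) := by
          filter_upwards [ae_restrict_mem measurableSet_Ioc] with x hx
          rw [Real.norm_eq_abs, abs_of_nonneg (Real.rpow_nonneg (by linarith [hx.2]) _)]
          exact Real.rpow_le_rpow_of_nonpos (by linarith) (by linarith [hx.2])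
            (by linarith)
        have := Integrable.bdd_mul (hDint.mono_set hsub1) hKm hKbd
        exact this.congr (by filter_upwards with x using mul_comm _ _)
      -- integrability on (b, t)
      have part2 : IntegrableOn (fun s => deriv u s * (t - s) ^ (-α)) (Set.Ioo b t) := by
        have hsub2 : Set.Ioo b t ⊆ Set.Ioo (0:ℝ) t :=
          fun x hx => ⟨lt_trans hb0 hx.1, hx.2⟩
        set c' : ℝ := ((n:ℝ) * (u t / 2) ^ (n-1))⁻¹ with hc'
        have hm0 : (0:ℝ) < (n:ℝ) * (u t / 2) ^ (n-1) := by positivity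
        have haesm : AEStronglyMeasurable (fun s => deriv u s * (t - s) ^ (-α))
            (volume.restrict (Set.Ioo b t)) := by
          apply AEStronglyMeasurable.mul
          · exact hDint.aestronglyMeasurable.mono_measure
              (Measure.restrict_mono (fun x hx => hsub0 (hsub2 hx)) le_rfl)
          · apply ContinuousOn.aestronglyMeasurable _ measurableSet_Ioo
            apply ContinuousOn.rpow_const ((continuous_sub_left t).continuousOn)
            intro x hx
            exact Or.inl (ne_of_gt (by have := hx.2; linarith))
        apply Integrable.mono' (((h2.mono_set hsub2).norm).const_mul c') haesm
        filter_upwards [ae_restrict_of_ae haepow, ae_restrict_mem measurableSet_Ioo]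
          with x hx hm
        have hx2 := hx (hsub2 hm)
        have hmx : u t / 2 ≤ u x := hlow x hm
        have hux : (0:ℝ) < u x := lt_of_lt_of_le (by linarith) hmx
        rw [hx2]
        have hpos : (0:ℝ) < (n:ℝ) * u x ^ (n-1) := by positivity
        have hre : (n:ℝ) * u x ^ (n-1) * deriv u x * (t - x) ^ (-α)
            = ((n:ℝ) * u x ^ (n-1)) * (deriv u x * (t - x) ^ (-α)) := by ring
        have hnorm : ‖(n:ℝ) * u x ^ (n-1) * (deriv u x * (t - x) ^ (-α))‖
            = ((n:ℝ) * u x ^ (n-1)) * ‖deriv u x * (t - x) ^ (-α)‖ := by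
          rw [norm_mul, Real.norm_eq_abs ((n:ℝ) * u x ^ (n-1)), abs_of_pos hpos]
        rw [hre, hnorm]
        have h1le : 1 ≤ c' * ((n:ℝ) * u x ^ (n-1)) := by
          have hle : (n:ℝ) * (u t / 2) ^ (n-1) ≤ (n:ℝ) * u x ^ (n-1) :=
            mul_le_mul_of_nonneg_left (pow_le_pow_left₀ (by linarith) hmx _) (le_of_lt hnR)
          calc (1:ℝ) = c' * ((n:ℝ) * (u t / 2) ^ (n-1)) := (inv_mul_cancel₀ (ne_of_gt hm0)).symm
            _ ≤ c' * ((n:ℝ) * u x ^ (n-1)) :=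
                mul_le_mul_of_nonneg_left hle (inv_nonneg.2 (le_of_lt hm0))
        calc ‖deriv u x * (t - x) ^ (-α)‖
            ≤ (c' * ((n:ℝ) * u x ^ (n-1))) * ‖deriv u x * (t - x) ^ (-α)‖ :=
              le_mul_of_one_le_left (norm_nonneg _) h1le
          _ = c' * ((n:ℝ) * u x ^ (n-1) * ‖deriv u x * (t - x) ^ (-α)‖) := by ring
      have := part1.union part2
      rwa [Set.Ioc_union_Ioo_eq_Ioo (le_of_lt hb0) hbt] at this
    -- the convexity estimate and kernel lemma
    have hkey : (∫ s in Set.Ioo 0 t,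
        ((1/(n:ℝ)) * deriv (fun x => u x ^ n) s - u t ^ (n-1) * deriv u s)
          * (t - s) ^ (-α)) ≤ 0 := by
      apply kernel_ineq hα ht0
      · exact (hIpow'.const_mul _).sub ((hDint.mono_set hsub0).const_mul _)
      · apply (((h2.const_mul (1/(n:ℝ))).sub (h1.const_mul (u t ^ (n-1)))).congr)
        filter_upwards with x
        simp only [Pi.sub_apply]
        ring
      · intro r hr
        have hrT : r ∈ Set.Icc (0:ℝ) T := ⟨hr.1, le_trans (le_of_lt hr.2) htT⟩
        have hsubr : Set.Ioo r t ⊆ Set.Ioo (0:ℝ) t := Set.Ioo_subset_Ioo_left hr.1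
        rw [integral_sub ((hIpow'.mono_set hsubr).const_mul _)
          (((hDint.mono_set hsub0).mono_set hsubr).const_mul _),
          MeasureTheory.integral_const_mul, MeasureTheory.integral_const_mul,
          hftcn r hr, hftc1 r hr]
        have hineq := pow_tangent_ineq (hupos t htmem) (hupos r hrT) n
        have hd : (1/(n:ℝ)) * (u t ^ n - u r ^ n)
            ≤ (1/(n:ℝ)) * ((n:ℝ) * u t ^ (n-1) * (u t - u r)) :=
          mul_le_mul_of_nonneg_left hineq (by positivity)
        have he : (1/(n:ℝ)) * ((n:ℝ) * u t ^ (n-1) * (u t - u r))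
            = u t ^ (n-1) * (u t - u r) := by
          field_simp
        linarith
    -- split the integral in hkey
    have hsplit : (∫ s in Set.Ioo 0 t,
        ((1/(n:ℝ)) * deriv (fun x => u x ^ n) s - u t ^ (n-1) * deriv u s)
          * (t - s) ^ (-α))
        = (1/(n:ℝ)) * (∫ s in Set.Ioo 0 t, deriv (fun x => u x ^ n) s * (t - s) ^ (-α))
          - u t ^ (n-1) * (∫ s in Set.Ioo 0 t, deriv u s * (t - s) ^ (-α)) := by
      rw [← MeasureTheory.integral_const_mul, ← MeasureTheory.integral_const_mul,
        ← integral_sub (h2.const_mul _) (h1.const_mul _)]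
      exact setIntegral_congr_fun measurableSet_Ioo (fun x _ => by ring)
    rw [hsplit] at hkey
    simp only [caputo]
    set X : ℝ := ∫ s in Set.Ioo 0 t, deriv (fun x => u x ^ n) s * (t - s) ^ (-α) with hX
    set Y : ℝ := ∫ s in Set.Ioo 0 t, deriv u s * (t - s) ^ (-α) with hY
    have hiq : (1/(n:ℝ)) * X ≤ u t ^ (n-1) * Y := by linarith
    calc (1/(n:ℝ)) * ((1 / Real.Gamma (1 - α)) * X)
        = (1 / Real.Gamma (1 - α)) * ((1/(n:ℝ)) * X) := by ring
      _ ≤ (1 / Real.Gamma (1 - α)) * (u t ^ (n-1) * Y) :=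
          mul_le_mul_of_nonneg_left hiq (le_of_lt hc)
      _ = u t ^ (n-1) * ((1 / Real.Gamma (1 - α)) * Y) := by ring
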